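/- Suppose s_i[0], x^k_i[0], r_i[0] ∈ [0,1] and s_i[0] + ∑_{k=1}^m x^k_i[0] + r_i[0] = 1 for all i, k. Fix a virus index k ∈ {1,…,m}, let M^k = I − hΓ^k + hB^k, and let P^k be a diagonal positive definite matrix such that (M^k)ᵀ P^k M^k − P^k is negative definite. Set σ_1^k = λ_min(P^k), σ_2^k = λ_max(P^k), and σ_3^k = λ_min(P^k − (M^k)ᵀ P^k M^k). Then x^k[t] converges to zero with exponential rate at least √(1 − σ_3^k/σ_2^k); in particular ‖x^k[t]‖ ≤ √(σ_2^k/σ_1^k) · ‖x^k[0]‖ · (√(1 − σ_3^k/σ_2^k))^t for all t ∈ ℤ_{≥0}. -/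

import Mathlib

open Matrix

lemma sqrtPowAux (x : ℝ) (hx : 0 ≤ x) (t : ℕ) : Real.sqrt (x ^ t) = Real.sqrt x ^ t := by
  induction t with
  | zero => simp
  | succ t ih => rw [pow_succ, pow_succ, Real.sqrt_mul (pow_nonneg hx t), ih]

lemma rayleighEqAux {n : ℕ} (A : Matrix (Fin n) (Fin n) ℝ)
    (hA : A.IsHermitian) (v : Fin n → ℝ) :
    ∃ w : Fin n → ℝ, (∑ i, w i ^ 2 = ∑ i, v i ^ 2) ∧
      v ⬝ᵥ A *ᵥ v = ∑ i, hA.eigenvalues i * w i ^ 2 := by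
  classical
  set U : Matrix (Fin n) (Fin n) ℝ := (hA.eigenvectorUnitary : Matrix (Fin n) (Fin n) ℝ) with hUdef
  have hstar : star U = Uᵀ := by
    ext i j; simp [Matrix.star_apply]
  set w : Fin n → ℝ := Uᵀ *ᵥ v with hw
  have hspec := hA.spectral_theorem
  have hdiag : (diagonal (RCLike.ofReal ∘ hA.eigenvalues) : Matrix (Fin n) (Fin n) ℝ)
      = diagonal hA.eigenvalues := rfl
  have hU : U * Uᵀ = 1 := by
    rw [← hstar]; exact (Matrix.mem_unitaryGroup_iff).mp hA.eigenvectorUnitary.2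
  have hvU : v ᵥ* U = w := by
    ext i; simp [vecMul, mulVec, dotProduct, w, transpose_apply, mul_comm]
  refine ⟨w, ?_, ?_⟩
  · have : U *ᵥ w = v := by
      rw [hw, mulVec_mulVec, hU, one_mulVec]
    calc ∑ i, w i ^ 2 = w ⬝ᵥ w := by simp [dotProduct, sq]
      _ = v ᵥ* U ⬝ᵥ w := by rw [hvU]
      _ = v ⬝ᵥ U *ᵥ w := (dotProduct_mulVec v U w).symm
      _ = v ⬝ᵥ v := by rw [this]
      _ = ∑ i, v i ^ 2 := by simp [dotProduct, sq]
  · conv_lhs => rw [hspec, hdiag, Unitary.conjStarAlgAut_apply, ← hUdef, hstar]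
    rw [← mulVec_mulVec, ← mulVec_mulVec, dotProduct_mulVec, hvU, ← hw]
    simp [dotProduct, mulVec_diagonal, sq]
    exact Finset.sum_congr rfl fun i _ => by ring

lemma rayleighBoundsAux {n : ℕ} (hn : 0 < n) (A : Matrix (Fin n) (Fin n) ℝ)
    (hA : A.IsHermitian) (v : Fin n → ℝ) :
    (⨅ i, hA.eigenvalues i) * (∑ i, v i ^ 2) ≤ v ⬝ᵥ A *ᵥ v ∧
      v ⬝ᵥ A *ᵥ v ≤ (⨆ i, hA.eigenvalues i) * (∑ i, v i ^ 2) := by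
  have : Nonempty (Fin n) := ⟨⟨0, hn⟩⟩
  obtain ⟨w, hww, hq⟩ := rayleighEqAux A hA v
  rw [hq, ← hww]
  constructor
  · rw [Finset.mul_sum]
    refine Finset.sum_le_sum fun i _ => ?_
    exact mul_le_mul_of_nonneg_right (ciInf_le (Set.Finite.bddBelow (Set.finite_range _)) i)
      (sq_nonneg _)
  · rw [Finset.mul_sum]
    refine Finset.sum_le_sum fun i _ => ?_
    exact mul_le_mul_of_nonneg_right (le_ciSup (Set.Finite.bddAbove (Set.finite_range _)) i)
      (sq_nonneg _)

lemma iInfEigenPosAux {n : ℕ} (hn : 0 < n) {A : Matrix (Fin n) (Fin n) ℝ}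
    (hA : A.PosDef) : 0 < ⨅ i, hA.isHermitian.eigenvalues i := by
  have : Nonempty (Fin n) := ⟨⟨0, hn⟩⟩
  obtain ⟨i, hi⟩ := Finite.exists_min hA.isHermitian.eigenvalues
  have heq : (⨅ j, hA.isHermitian.eigenvalues j) = hA.isHermitian.eigenvalues i :=
    le_antisymm (ciInf_le (Set.Finite.bddBelow (Set.finite_range _)) i) (le_ciInf hi)
  rw [heq]
  exact hA.eigenvalues_pos i

/-- Corollary 1 of the paper: with a diagonal positive definite `P^k` such that
`(M^k)ᵀ P^k M^k - P^k ≺ 0`, the infection level of virus `k` converges to zero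
with exponential rate at least `√(1 - σ₃/σ₂)`, and in particular
`‖x^k[t]‖ ≤ √(σ₂/σ₁) ‖x^k[0]‖ (√(1 - σ₃/σ₂))^t`. -/
theorem multiVirusSIR_exponential_rate
    (n m : ℕ) (hn : 0 < n) (hm : 0 < m) (h : ℝ) (hh : 0 < h)
    (β : Fin m → Fin n → Fin n → ℝ) (γ : Fin m → Fin n → ℝ)
    (hβ : ∀ k i j, 0 ≤ β k i j) (hγ : ∀ k i, 0 < γ k i)
    (hβsum : ∀ i, h * (∑ k, ∑ j, β k i j) ≤ 1)
    (hγsum : ∀ i, h * (∑ k, γ k i) ≤ 1)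
    (s : ℕ → Fin n → ℝ) (x : ℕ → Fin m → Fin n → ℝ) (r : ℕ → Fin n → ℝ)
    (hs : ∀ t i, s (t + 1) i = s t i - h * (s t i * ∑ k, ∑ j, β k i j * x t k j))
    (hx : ∀ t k i, x (t + 1) k i
      = x t k i + h * (s t i * (∑ j, β k i j * x t k j) - γ k i * x t k i))
    (hr : ∀ t i, r (t + 1) i = r t i + h * ∑ k, γ k i * x t k i)
    (hinit : ∀ i, s 0 i ∈ Set.Icc (0 : ℝ) 1 ∧ (∀ k, x 0 k i ∈ Set.Icc (0 : ℝ) 1) ∧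
      r 0 i ∈ Set.Icc (0 : ℝ) 1 ∧ s 0 i + (∑ k, x 0 k i) + r 0 i = 1)
    (k : Fin m)
    (M : Matrix (Fin n) (Fin n) ℝ)
    (hM : M = 1 - h • Matrix.diagonal (γ k) + h • Matrix.of (β k))
    (P : Matrix (Fin n) (Fin n) ℝ) (hPdiag : P.IsDiag) (hP : P.PosDef)
    (hQ : (P - Mᵀ * P * M).PosDef) :
    ∀ t : ℕ, Real.sqrt (∑ i, (x t k i) ^ 2)
      ≤ Real.sqrt ((⨆ i, hP.isHermitian.eigenvalues i) / (⨅ i, hP.isHermitian.eigenvalues i))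
        * Real.sqrt (∑ i, (x 0 k i) ^ 2)
        * (Real.sqrt (1 - (⨅ i, hQ.isHermitian.eigenvalues i)
            / (⨆ i, hP.isHermitian.eigenvalues i))) ^ t := by
  classical
  have hne : Nonempty (Fin n) := ⟨⟨0, hn⟩⟩
  set σ1 := ⨅ i, hP.isHermitian.eigenvalues i with hσ1def
  set σ2 := ⨆ i, hP.isHermitian.eigenvalues i with hσ2def
  set σ3 := ⨅ i, hQ.isHermitian.eigenvalues i with hσ3def
  have hσ1 : 0 < σ1 := iInfEigenPosAux hn hP
  have hσ3 : 0 < σ3 := iInfEigenPosAux hn hQ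
  have hσ2 : 0 < σ2 := by
    have := le_ciSup (Set.Finite.bddAbove (Set.finite_range hP.isHermitian.eigenvalues)) ⟨0, hn⟩
    exact lt_of_lt_of_le (hP.eigenvalues_pos ⟨0, hn⟩) this
  -- invariance of the simplex
  have inv : ∀ t, (∀ i, 0 ≤ s t i) ∧ (∀ k' i, 0 ≤ x t k' i) ∧ (∀ i, 0 ≤ r t i) ∧
      (∀ i, s t i + (∑ k', x t k' i) + r t i = 1) := by
    intro t
    induction t with
    | zero =>
      refine ⟨fun i => (hinit i).1.1, fun k' i => ((hinit i).2.1 k').1,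
        fun i => (hinit i).2.2.1.1, fun i => (hinit i).2.2.2⟩
    | succ t ih =>
      obtain ⟨hs0, hx0, hr0, hsum0⟩ := ih
      have hxle1 : ∀ k' i, x t k' i ≤ 1 := by
        intro k' i
        have h1 : x t k' i ≤ ∑ k'', x t k'' i :=
          Finset.single_le_sum (fun j _ => hx0 j i) (Finset.mem_univ k')
        nlinarith [hs0 i, hr0 i, hsum0 i]
      have hAnn : ∀ i, 0 ≤ ∑ k', ∑ j, β k' i j * x t k' j := fun i =>
        Finset.sum_nonneg fun k' _ => Finset.sum_nonneg fun j _ =>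
          mul_nonneg (hβ k' i j) (hx0 k' j)
      have hA1 : ∀ i, h * (∑ k', ∑ j, β k' i j * x t k' j) ≤ 1 := by
        intro i
        calc h * (∑ k', ∑ j, β k' i j * x t k' j) ≤ h * (∑ k', ∑ j, β k' i j) := by
              refine mul_le_mul_of_nonneg_left ?_ hh.le
              refine Finset.sum_le_sum fun k' _ => Finset.sum_le_sum fun j _ => ?_
              nlinarith [hβ k' i j, hx0 k' j, hxle1 k' j]
          _ ≤ 1 := hβsum i
      refine ⟨?_, ?_, ?_, ?_⟩
      · intro i; rw [hs t i]
        nlinarith [hs0 i, hA1 i, hAnn i]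
      · intro k' i; rw [hx t k' i]
        have hγ1 : h * γ k' i ≤ 1 := by
          have h2 : γ k' i ≤ ∑ k'', γ k'' i :=
            Finset.single_le_sum (fun j _ => (hγ j i).le) (Finset.mem_univ k')
          nlinarith [hγsum i]
        have hBx : 0 ≤ ∑ j, β k' i j * x t k' j :=
          Finset.sum_nonneg fun j _ => mul_nonneg (hβ k' i j) (hx0 k' j)
        nlinarith [hx0 k' i, hs0 i, hh.le, mul_nonneg (mul_nonneg hh.le (hs0 i)) hBx,
          mul_nonneg (sub_nonneg.2 hγ1) (hx0 k' i)]
      · intro i; rw [hr t i]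
        have hgx : 0 ≤ ∑ k', γ k' i * x t k' i :=
          Finset.sum_nonneg fun k' _ => mul_nonneg (hγ k' i).le (hx0 k' i)
        nlinarith [hr0 i, hh.le]
      · intro i
        have hxsum : ∑ k', x (t + 1) k' i
            = (∑ k', x t k' i) + h * (s t i * ∑ k', ∑ j, β k' i j * x t k' j)
              - h * ∑ k', γ k' i * x t k' i := by
          simp only [hx t]
          rw [Finset.sum_add_distrib]
          have e3 : ∑ k', h * (s t i * (∑ j, β k' i j * x t k' j) - γ k' i * x t k' i)
              = h * (s t i * ∑ k', ∑ j, β k' i j * x t k' j) - h * ∑ k', γ k' i * x t k' i := by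
            have e1 : ∑ k', h * (s t i * ∑ j, β k' i j * x t k' j)
                = h * (s t i * ∑ k', ∑ j, β k' i j * x t k' j) := by
              simp only [Finset.mul_sum]
            have e2 : ∑ k', h * (γ k' i * x t k' i) = h * ∑ k', γ k' i * x t k' i := by
              rw [Finset.mul_sum]
            calc ∑ k', h * (s t i * (∑ j, β k' i j * x t k' j) - γ k' i * x t k' i)
                = ∑ k', (h * (s t i * ∑ j, β k' i j * x t k' j) - h * (γ k' i * x t k' i)) :=
                  Finset.sum_congr rfl fun _ _ => by ring
              _ = (∑ k', h * (s t i * ∑ j, β k' i j * x t k' j))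
                  - ∑ k', h * (γ k' i * x t k' i) := Finset.sum_sub_distrib _ _
              _ = _ := by rw [e1, e2]
          rw [e3]
          ring
        rw [hs t i, hr t i, hxsum]
        linear_combination hsum0 i
  have hsle1 : ∀ t i, s t i ≤ 1 := by
    intro t i
    obtain ⟨hs0, hx0, hr0, hsum0⟩ := inv t
    have : 0 ≤ ∑ k', x t k' i := Finset.sum_nonneg fun k' _ => hx0 k' i
    nlinarith [hr0 i, hsum0 i]
  -- entrywise bound x(t+1) ≤ M x(t)
  have hMv : ∀ (v : Fin n → ℝ) i,
      (M *ᵥ v) i = v i - h * (γ k i * v i) + h * (∑ j, β k i j * v j) := by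
    intro v i
    have hd : (diagonal (γ k) *ᵥ v) i = γ k i * v i := mulVec_diagonal _ _ _
    have hb : (of (β k) *ᵥ v) i = ∑ j, β k i j * v j := rfl
    rw [hM, add_mulVec, sub_mulVec, one_mulVec, smul_mulVec, smul_mulVec]
    simp only [Pi.add_apply, Pi.sub_apply, Pi.smul_apply, smul_eq_mul, hd, hb]
  have hstep_le : ∀ t i, x (t + 1) k i ≤ (M *ᵥ x t k) i := by
    intro t i
    obtain ⟨hs0, hx0, hr0, hsum0⟩ := inv t
    rw [hx t k i, hMv]
    have hBx : 0 ≤ ∑ j, β k i j * x t k j :=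
      Finset.sum_nonneg fun j _ => mul_nonneg (hβ k i j) (hx0 k j)
    nlinarith [mul_nonneg (mul_nonneg hh.le (sub_nonneg.2 (hsle1 t i))) hBx]
  -- quadratic form of the diagonal matrix P
  have hPap : ∀ (w : Fin n → ℝ) i, (P *ᵥ w) i = P i i * w i := by
    intro w i
    rw [mulVec, dotProduct]
    rw [Finset.sum_eq_single i (fun j _ hj => by rw [hPdiag (Ne.symm hj), zero_mul])
      (fun hi => absurd (Finset.mem_univ i) hi)]
  have hPq : ∀ w : Fin n → ℝ, w ⬝ᵥ P *ᵥ w = ∑ i, P i i * w i ^ 2 := by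
    intro w
    rw [dotProduct]
    exact Finset.sum_congr rfl fun i _ => by rw [hPap]; ring
  have hPpos : ∀ i, 0 < P i i := by
    intro i
    have h0 : (Pi.single i 1 : Fin n → ℝ) ≠ 0 := by
      intro hcon
      have := congrFun hcon i
      simp at this
    have this : (0:ℝ) < (Pi.single i 1 : Fin n → ℝ) ⬝ᵥ P *ᵥ (Pi.single i 1) := hP.dotProduct_mulVec_pos h0
    rw [hPq] at this
    have hP1 : ∑ j, P j j * (Pi.single i 1 : Fin n → ℝ) j ^ 2 = P i i := by
      rw [Finset.sum_eq_single i (fun j _ hj => by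
        rw [Pi.single_eq_of_ne hj]; ring) (fun hi => absurd (Finset.mem_univ i) hi)]
      simp
    rwa [hP1] at this
  -- energy identity
  have hQq : ∀ v : Fin n → ℝ,
      v ⬝ᵥ (P - Mᵀ * P * M) *ᵥ v = v ⬝ᵥ P *ᵥ v - (M *ᵥ v) ⬝ᵥ P *ᵥ (M *ᵥ v) := by
    intro v
    rw [sub_mulVec, dotProduct_sub]
    congr 1
    rw [← mulVec_mulVec, ← mulVec_mulVec, dotProduct_mulVec, vecMul_transpose]
  -- Lyapunov decay
  set ρ := 1 - σ3 / σ2 with hρdef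
  have hdecay : ∀ t, x (t + 1) k ⬝ᵥ P *ᵥ x (t + 1) k ≤ ρ * (x t k ⬝ᵥ P *ᵥ x t k) := by
    intro t
    obtain ⟨hs0, hx0, hr0, hsum0⟩ := inv (t + 1)
    have h1 : x (t + 1) k ⬝ᵥ P *ᵥ x (t + 1) k ≤ (M *ᵥ x t k) ⬝ᵥ P *ᵥ (M *ᵥ x t k) := by
      rw [hPq, hPq]
      refine Finset.sum_le_sum fun i _ => ?_
      have h2 := hstep_le t i
      have h3 := hx0 k i
      have h9 : x (t + 1) k i ^ 2 ≤ (M *ᵥ x t k) i ^ 2 := by nlinarith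
      exact mul_le_mul_of_nonneg_left h9 (hPpos i).le
    have h4 := (hQq (x t k))
    have h5 := (rayleighBoundsAux hn _ hQ.isHermitian (x t k)).1
    have h6 := (rayleighBoundsAux hn _ hP.isHermitian (x t k)).2
    rw [← hσ3def] at h5
    rw [← hσ2def] at h6
    -- σ3 * Σ v² ≥ (σ3/σ2) * V
    have h7 : (σ3 / σ2) * (x t k ⬝ᵥ P *ᵥ x t k) ≤ σ3 * (∑ i, x t k i ^ 2) := by
      have : σ3 * (∑ i, x t k i ^ 2) - (σ3 / σ2) * (x t k ⬝ᵥ P *ᵥ x t k)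
          = (σ3 / σ2) * (σ2 * (∑ i, x t k i ^ 2) - x t k ⬝ᵥ P *ᵥ x t k) := by
        field_simp
      nlinarith [div_nonneg hσ3.le hσ2.le]
    have h8 : x t k ⬝ᵥ (P - Mᵀ * P * M) *ᵥ x t k ≥ (σ3 / σ2) * (x t k ⬝ᵥ P *ᵥ x t k) :=
      le_trans h7 (le_trans h5 (le_refl _))
    rw [hρdef]
    nlinarith [h1, h4, h8]
  -- ρ is nonnegative
  have hρ0 : 0 ≤ ρ := by
    have hσ32 : σ3 ≤ σ2 := by
      set e : Fin n → ℝ := Pi.single ⟨0, hn⟩ 1 with he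
      have hes : ∑ i, e i ^ 2 = 1 := by
        rw [Finset.sum_eq_single ⟨0, hn⟩ (fun j _ hj => by
          rw [he]; simp [Pi.single_eq_of_ne hj]) (fun hi => absurd (Finset.mem_univ _) hi)]
        simp [he]
      have h5 := (rayleighBoundsAux hn _ hQ.isHermitian e).1
      have h6 := (rayleighBoundsAux hn _ hP.isHermitian e).2
      rw [hes, mul_one] at h5 h6
      have h7 := hQq e
      have h8 : 0 ≤ (M *ᵥ e) ⬝ᵥ P *ᵥ (M *ᵥ e) := hP.posSemidef.dotProduct_mulVec_nonneg _
      rw [← hσ3def] at h5; rw [← hσ2def] at h6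
      linarith
    rw [hρdef]
    have : σ3 / σ2 ≤ 1 := (div_le_one hσ2).mpr hσ32
    linarith
  -- iterate the decay
  have hiter : ∀ t, x t k ⬝ᵥ P *ᵥ x t k ≤ ρ ^ t * (x 0 k ⬝ᵥ P *ᵥ x 0 k) := by
    intro t
    induction t with
    | zero => simp
    | succ t ih =>
      calc x (t + 1) k ⬝ᵥ P *ᵥ x (t + 1) k ≤ ρ * (x t k ⬝ᵥ P *ᵥ x t k) := hdecay t
        _ ≤ ρ * (ρ ^ t * (x 0 k ⬝ᵥ P *ᵥ x 0 k)) := by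
            exact mul_le_mul_of_nonneg_left ih hρ0
        _ = ρ ^ (t + 1) * (x 0 k ⬝ᵥ P *ᵥ x 0 k) := by ring
  -- final bound
  intro t
  have hlow := (rayleighBoundsAux hn _ hP.isHermitian (x t k)).1
  have hup := (rayleighBoundsAux hn _ hP.isHermitian (x 0 k)).2
  rw [← hσ1def] at hlow; rw [← hσ2def] at hup
  have hkey : ∑ i, x t k i ^ 2 ≤ σ2 / σ1 * (∑ i, x 0 k i ^ 2) * ρ ^ t := by
    have h1 : σ1 * (∑ i, x t k i ^ 2) ≤ ρ ^ t * (σ2 * (∑ i, x 0 k i ^ 2)) := by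
      calc σ1 * (∑ i, x t k i ^ 2) ≤ x t k ⬝ᵥ P *ᵥ x t k := hlow
        _ ≤ ρ ^ t * (x 0 k ⬝ᵥ P *ᵥ x 0 k) := hiter t
        _ ≤ ρ ^ t * (σ2 * (∑ i, x 0 k i ^ 2)) :=
            mul_le_mul_of_nonneg_left hup (pow_nonneg hρ0 t)
    rw [div_mul_eq_mul_div, div_mul_eq_mul_div, le_div_iff₀ hσ1]
    nlinarith [h1]
  calc Real.sqrt (∑ i, x t k i ^ 2)
      ≤ Real.sqrt (σ2 / σ1 * (∑ i, x 0 k i ^ 2) * ρ ^ t) := Real.sqrt_le_sqrt hkey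
    _ = Real.sqrt (σ2 / σ1) * Real.sqrt (∑ i, x 0 k i ^ 2) * Real.sqrt ρ ^ t := by
        rw [Real.sqrt_mul (by positivity), Real.sqrt_mul (div_nonneg hσ2.le hσ1.le),
          sqrtPowAux ρ hρ0]
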